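/- arXiv:2002.10910 — 7 statements merged into one kernel-verified Lean document; each statement's English description precedes it below -/
import Mathlib

section
/- (Necessity direction of Afriat's Theorem, statement 1 ⟹ statement 4.) Let D = {(α_t, β_t) : t = 1,...,N} be a dataset with α_t ∈ ℝ^m strictly positive componentwise and β_t ∈ ℝ^m nonnegative componentwise. Suppose there exists a continuous utility function U : ℝ^m_{≥0} → ℝ that is monotone increasing (x ≤ y componentwise implies U(x) ≤ U(y), strict if x < y strictly componentwise) such that for every t, β_t ∈ argmax{U(β) : β ∈ ℝ^m_{≥0}, α_t'β ≤ α_t'β_t}. Then the dataset satisfies GARP: for every finite sequence of indices t_1, ..., t_L with α_{t_i}'β_{t_{i+1}} ≤ α_{t_i}'β_{t_i} for all i = 1, ..., L−1, it holds that α_{t_L}'β_{t_1} ≥ α_{t_L}'β_{t_L} whenever additionally α_{t_L}'β_{t_1} ≤ α_{t_L}'β_{t_L}; i.e., the two inner products are then equal. -/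
open Finset

/-- Euclidean inner product on `Fin m → ℝ`. -/
def dotp {m : ℕ} (x y : Fin m → ℝ) : ℝ := ∑ i, x i * y i

/-- **Necessity direction of Afriat's Theorem (1 ⟹ 4).**  If a dataset with strictly
positive probes `α t` and nonnegative responses `β t` is rationalized by a continuous,
monotone increasing utility `U` on the nonnegative orthant, then the dataset satisfies
GARP: along any revealed-preference chain `t 0, …, t (L-1)`, if additionally
`α_{t_{L-1}}'β_{t_0} ≤ α_{t_{L-1}}'β_{t_{L-1}}` then the two inner products are equal. -/
theorem afriat_necessity {m N : ℕ}
    (α βv : Fin N → Fin m → ℝ)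
    (hα : ∀ t i, 0 < α t i) (hβ : ∀ t i, 0 ≤ βv t i)
    (U : (Fin m → ℝ) → ℝ)
    (hUcont : ContinuousOn U {b | ∀ i, 0 ≤ b i})
    (hUmono : ∀ x y : Fin m → ℝ, (∀ i, 0 ≤ x i) → (∀ i, 0 ≤ y i) →
      (∀ i, x i ≤ y i) → U x ≤ U y)
    (hUstrict : ∀ x y : Fin m → ℝ, (∀ i, 0 ≤ x i) → (∀ i, 0 ≤ y i) →
      (∀ i, x i < y i) → U x < U y)
    (hrat : ∀ t, ∀ b : Fin m → ℝ, (∀ i, 0 ≤ b i) →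
      dotp (α t) b ≤ dotp (α t) (βv t) → U b ≤ U (βv t)) :
    ∀ L : ℕ, 0 < L → ∀ t : ℕ → Fin N,
      (∀ i, i + 1 < L →
        dotp (α (t i)) (βv (t (i+1))) ≤ dotp (α (t i)) (βv (t i))) →
      dotp (α (t (L-1))) (βv (t 0)) ≤ dotp (α (t (L-1))) (βv (t (L-1))) →
      dotp (α (t (L-1))) (βv (t 0)) = dotp (α (t (L-1))) (βv (t (L-1))) := by
  -- Key lemma: strictly inside the budget ⟹ strictly worse than the chosen bundle.
  have key : ∀ s : Fin N, ∀ b : Fin m → ℝ, (∀ i, 0 ≤ b i) →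
      dotp (α s) b < dotp (α s) (βv s) → U b < U (βv s) := by
    intro s b hb hlt
    have hne : (univ : Finset (Fin m)).Nonempty := by
      by_contra h
      rw [Finset.not_nonempty_iff_eq_empty] at h
      simp [dotp, h] at hlt
    set S : ℝ := ∑ i, α s i with hS
    have hSpos : 0 < S := Finset.sum_pos (fun i _ => hα s i) hne
    set ε : ℝ := (dotp (α s) (βv s) - dotp (α s) b) / S with hε
    have hεpos : 0 < ε := div_pos (by linarith) hSpos
    have hdot : dotp (α s) (fun i => b i + ε) ≤ dotp (α s) (βv s) := by
      have : dotp (α s) (fun i => b i + ε) = dotp (α s) b + ε * S := by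
        simp only [dotp, hS]
        rw [Finset.mul_sum, ← Finset.sum_add_distrib]
        congr 1; ext i; ring
      rw [this, hε, div_mul_cancel₀ _ (ne_of_gt hSpos)]
      linarith
    have h1 : U b < U (fun i => b i + ε) :=
      hUstrict b _ hb (fun i => by have := hb i; positivity)
        (fun i => by linarith)
    have h2 : U (fun i => b i + ε) ≤ U (βv s) :=
      hrat s _ (fun i => by have := hb i; positivity) hdot
    linarith
  intro L hL t hchain hle
  -- Along the chain, utilities are nonincreasing.
  have hchainU : ∀ i, i < L → U (βv (t i)) ≤ U (βv (t 0)) := by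
    intro i
    induction i with
    | zero => intro _; exact le_refl _
    | succ i ih =>
      intro hiL
      have h1 : U (βv (t (i+1))) ≤ U (βv (t i)) :=
        hrat (t i) _ (hβ _) (hchain i hiL)
      exact le_trans h1 (ih (Nat.lt_of_succ_lt hiL))
  by_contra hne
  have hlt : dotp (α (t (L-1))) (βv (t 0)) < dotp (α (t (L-1))) (βv (t (L-1))) :=
    lt_of_le_of_ne hle hne
  have := key (t (L-1)) (βv (t 0)) (hβ _) hlt
  have := hchainU (L-1) (Nat.sub_lt hL one_pos)
  linarith
end

section
/- (Constructive direction of Afriat's Theorem, statement 2 ⟹ statement 1: the Afriat utility rationalizes the data.) Let D = {(α_t, β_t) : t = 1,...,N} be a dataset with α_t ∈ ℝ^m strictly positive componentwise and β_t ∈ ℝ^m nonnegative componentwise, and suppose there exist reals u_t and λ_t > 0 satisfying the Afriat inequalities u_s − u_t − λ_t α_t'(β_s − β_t) ≤ 0 for all t, s. Define U(β) = min_{t ∈ {1,...,N}} { u_t + λ_t α_t'(β − β_t) } for β ∈ ℝ^m_{≥0}. Then (i) U(β_s) = u_s for every s ∈ {1,...,N}, and (ii) for every n ∈ {1,...,N}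 and every β ∈ ℝ^m_{≥0} with α_n'β ≤ α_n'β_n, one has U(β) ≤ U(β_n); that is, β_n maximizes U over the budget set {β ∈ ℝ^m_{≥0} : α_n'β ≤ α_n'β_n}. -/
open Finset

/-- The piecewise-linear Afriat utility
`U(β) = min_t { u t + λ t ⟨α t, β − β t⟩ }` built from a feasible solution of the
Afriat inequalities. -/
noncomputable def afriatU {m N : ℕ} [Nonempty (Fin N)]
    (α βv : Fin N → Fin m → ℝ) (u lam : Fin N → ℝ) (b : Fin m → ℝ) : ℝ :=
  Finset.univ.inf' Finset.univ_nonempty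
    (fun t => u t + lam t * dotp (α t) (fun i => b i - βv t i))

/-- **Constructive direction of Afriat's Theorem (2 ⟹ 1).**  If reals `u t` and
`λ t > 0` satisfy the Afriat inequalities for the dataset `{(α t, β t)}` (probes
strictly positive, responses nonnegative), then the Afriat utility
`U(β) = min_t { u t + λ t ⟨α t, β − β t⟩ }` satisfies (i) `U (β s) = u s` for all `s`,
and (ii) for every `n`, `β n` maximizes `U` over the budget set
`{β ≥ 0 : ⟨α n, β⟩ ≤ ⟨α n, β n⟩}`. -/
theorem afriat_constructive {m N : ℕ} [Nonempty (Fin N)]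
    (α βv : Fin N → Fin m → ℝ)
    (hα : ∀ t i, 0 < α t i) (hβ : ∀ t i, 0 ≤ βv t i)
    (u lam : Fin N → ℝ) (hlam : ∀ t, 0 < lam t)
    (hAfriat : ∀ t s, u s - u t - lam t * dotp (α t) (fun i => βv s i - βv t i) ≤ 0) :
    (∀ s, afriatU α βv u lam (βv s) = u s) ∧
    (∀ n, ∀ b : Fin m → ℝ, (∀ i, 0 ≤ b i) →
      dotp (α n) b ≤ dotp (α n) (βv n) →
      afriatU α βv u lam b ≤ afriatU α βv u lam (βv n)) := by
  have hi : ∀ s, afriatU α βv u lam (βv s) = u s := by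
    intro s
    apply le_antisymm
    · exact Finset.inf'_le _ (Finset.mem_univ s) |>.trans_eq (by
        simp [dotp])
    · apply Finset.le_inf'
      intro t _
      have := hAfriat t s
      linarith
  refine ⟨hi, fun n b hb hbud => ?_⟩
  rw [hi n]
  refine (Finset.inf'_le _ (Finset.mem_univ n)).trans ?_
  have hdot : dotp (α n) (fun i => b i - βv n i) ≤ 0 := by
    have : dotp (α n) (fun i => b i - βv n i) = dotp (α n) b - dotp (α n) (βv n) := by
      simp [dotp, mul_sub, Finset.sum_sub_distrib]
    linarith
  nlinarith [hlam n]
end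

section
/- (The Kalman measurement update contracts the covariance.) Let S ∈ ℝ^{X×X} be symmetric positive semidefinite, R ∈ ℝ^{Y×Y} symmetric positive definite, and C ∈ ℝ^{Y×X}. Then the updated covariance S − S Cᵀ (C S Cᵀ + R)^{-1} C S is symmetric positive semidefinite and satisfies S − S Cᵀ (C S Cᵀ + R)^{-1} C S ⪯ S in the Loewner order. Consequently, for any A ∈ ℝ^{X×X} and symmetric positive semidefinite Q, any symmetric positive semidefinite solution Σ of the algebraic Riccati equation Σ = A (Σ − Σ Cᵀ (C Σ Cᵀ + R)^{-1} C Σ) Aᵀ + Q satisfies Σ ⪰ Q. -/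
open Matrix

lemma kalman_joseph {X Y : ℕ}
    (S : Matrix (Fin X) (Fin X) ℝ) (R M : Matrix (Fin Y) (Fin Y) ℝ)
    (C : Matrix (Fin Y) (Fin X) ℝ)
    (hSt : Sᵀ = S) (hMit : M⁻¹ᵀ = M⁻¹) (hdet : IsUnit M.det)
    (hMdef : M = C * S * Cᵀ + R) :
    S - S * Cᵀ * M⁻¹ * C * S
      = (1 - S * Cᵀ * M⁻¹ * C) * S * (1 - S * Cᵀ * M⁻¹ * C)ᵀ
        + (S * Cᵀ * M⁻¹) * R * (S * Cᵀ * M⁻¹)ᵀ := by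
  simp only [transpose_sub, transpose_one, transpose_mul, transpose_transpose, hMit, hSt,
    Matrix.sub_mul, Matrix.mul_sub, Matrix.one_mul, Matrix.mul_one, Matrix.mul_assoc]
  have hcomb : C * (S * (Cᵀ * (M⁻¹ * (C * S)))) + R * (M⁻¹ * (C * S))
      = M * (M⁻¹ * (C * S)) := by
    rw [hMdef]; simp only [Matrix.add_mul, Matrix.mul_assoc]
  have hcol : M * (M⁻¹ * (C * S)) = C * S := by
    rw [← Matrix.mul_assoc, mul_nonsing_inv _ hdet, Matrix.one_mul]
  have hfin : S * (Cᵀ * (M⁻¹ * (C * (S * (Cᵀ * (M⁻¹ * (C * S)))))))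
        + S * (Cᵀ * (M⁻¹ * (R * (M⁻¹ * (C * S)))))
      = S * (Cᵀ * (M⁻¹ * (C * S))) := by
    rw [← Matrix.mul_add, ← Matrix.mul_add, ← Matrix.mul_add, hcomb, hcol]
  rw [eq_sub_of_add_eq hfin]
  abel

lemma kalman_aux {X Y : ℕ}
    (S : Matrix (Fin X) (Fin X) ℝ) (R : Matrix (Fin Y) (Fin Y) ℝ)
    (C : Matrix (Fin Y) (Fin X) ℝ)
    (hS : S.PosSemidef) (hR : R.PosDef) :
    (S - S * Cᵀ * (C * S * Cᵀ + R)⁻¹ * C * S).PosSemidef := by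
  have hSt : Sᵀ = S := by
    rw [← conjTranspose_eq_transpose_of_trivial]; exact hS.isHermitian
  have hCSC : (C * S * Cᵀ).PosSemidef := by
    have h := hS.mul_mul_conjTranspose_same C
    rwa [conjTranspose_eq_transpose_of_trivial] at h
  have hM : (C * S * Cᵀ + R).PosDef := Matrix.PosDef.posSemidef_add hCSC hR
  have hMinv : (C * S * Cᵀ + R)⁻¹.PosDef := hM.inv
  have hMit : (C * S * Cᵀ + R)⁻¹ᵀ = (C * S * Cᵀ + R)⁻¹ := by
    rw [← conjTranspose_eq_transpose_of_trivial]; exact hMinv.isHermitian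
  have hdet : IsUnit (C * S * Cᵀ + R).det := isUnit_iff_ne_zero.2 hM.det_pos.ne'
  rw [kalman_joseph S R (C * S * Cᵀ + R) C hSt hMit hdet rfl]
  have h1 : ((1 - S * Cᵀ * (C * S * Cᵀ + R)⁻¹ * C) * S
      * (1 - S * Cᵀ * (C * S * Cᵀ + R)⁻¹ * C)ᵀ).PosSemidef := by
    have h := hS.mul_mul_conjTranspose_same (1 - S * Cᵀ * (C * S * Cᵀ + R)⁻¹ * C)
    rwa [conjTranspose_eq_transpose_of_trivial] at h
  have h2 : ((S * Cᵀ * (C * S * Cᵀ + R)⁻¹) * R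
      * (S * Cᵀ * (C * S * Cᵀ + R)⁻¹)ᵀ).PosSemidef := by
    have h := hR.posSemidef.mul_mul_conjTranspose_same (S * Cᵀ * (C * S * Cᵀ + R)⁻¹)
    rwa [conjTranspose_eq_transpose_of_trivial] at h
  exact h1.add h2

lemma kalman_aux2 {X Y : ℕ}
    (S : Matrix (Fin X) (Fin X) ℝ) (R : Matrix (Fin Y) (Fin Y) ℝ)
    (C : Matrix (Fin Y) (Fin X) ℝ)
    (hS : S.PosSemidef) (hR : R.PosDef) :
    (S * Cᵀ * (C * S * Cᵀ + R)⁻¹ * C * S).PosSemidef := by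
  have hSt : Sᵀ = S := by
    rw [← conjTranspose_eq_transpose_of_trivial]; exact hS.isHermitian
  have hCSC : (C * S * Cᵀ).PosSemidef := by
    have h := hS.mul_mul_conjTranspose_same C
    rwa [conjTranspose_eq_transpose_of_trivial] at h
  have hMinv : (C * S * Cᵀ + R)⁻¹.PosDef := (Matrix.PosDef.posSemidef_add hCSC hR).inv
  have h := hMinv.posSemidef.conjTranspose_mul_mul_same (C * S)
  rw [conjTranspose_eq_transpose_of_trivial, transpose_mul, hSt] at h
  have e : S * Cᵀ * ((C * S * Cᵀ + R)⁻¹ * (C * S))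
      = S * Cᵀ * (C * S * Cᵀ + R)⁻¹ * C * S := by
    simp only [Matrix.mul_assoc]
  rwa [Matrix.mul_assoc, e] at h

/-- **The Kalman measurement update contracts the covariance.**  For symmetric
positive semidefinite `S`, positive definite `R` and any `C`, the updated covariance
`S − S Cᵀ (C S Cᵀ + R)⁻¹ C S` is positive semidefinite and dominated by `S` in the
Loewner order.  Consequently any positive semidefinite solution `Σ` of the algebraic
Riccati equation `Σ = A (Σ − Σ Cᵀ (C Σ Cᵀ + R)⁻¹ C Σ) Aᵀ + Q` (with `Q`
positive semidefinite) satisfies `Σ ⪰ Q`. -/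
theorem kalman_update_contracts {X Y : ℕ}
    (S : Matrix (Fin X) (Fin X) ℝ) (R : Matrix (Fin Y) (Fin Y) ℝ)
    (C : Matrix (Fin Y) (Fin X) ℝ)
    (hS : S.PosSemidef) (hR : R.PosDef) :
    (S - S * Cᵀ * (C * S * Cᵀ + R)⁻¹ * C * S).PosSemidef ∧
    (S - (S - S * Cᵀ * (C * S * Cᵀ + R)⁻¹ * C * S)).PosSemidef ∧
    (∀ A Q Sig : Matrix (Fin X) (Fin X) ℝ, Q.PosSemidef → Sig.PosSemidef →
      Sig = A * (Sig - Sig * Cᵀ * (C * Sig * Cᵀ + R)⁻¹ * C * Sig) * Aᵀ + Q →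
      (Sig - Q).PosSemidef) := by
  refine ⟨kalman_aux S R C hS hR, ?_, ?_⟩
  · rw [sub_sub_cancel]
    exact kalman_aux2 S R C hS hR
  · intro A Q Sig hQ hSig heq
    have hU := (kalman_aux Sig R C hSig hR).mul_mul_conjTranspose_same A
    rw [conjTranspose_eq_transpose_of_trivial] at hU
    have hd : Sig - Q = A * (Sig - Sig * Cᵀ * (C * Sig * Cᵀ + R)⁻¹ * C * Sig) * Aᵀ := by
      conv_lhs => rw [heq]
      rw [add_sub_cancel_right]
    rwa [hd]
end

section
/- (Monotonicity of the Riccati/Kalman update in the prior covariance.) Let R ∈ ℝ^{Y×Y} be symmetric positive definite, C ∈ ℝ^{Y×X}, A ∈ ℝ^{X×X}, and let Q ∈ ℝ^{X×X} be symmetric positive semidefinite. Define the Riccati map 𝓡(S) = A (S − S Cᵀ (C S Cᵀ + R)^{-1} C S) Aᵀ + Q on symmetric positive definite matrices S. If S₁ and S₂ are symmetric positive definite with S₁ ⪯ S₂ in the Loewner order, then 𝓡(S₁) ⪯ 𝓡(S₂). -/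
open Matrix
open scoped MatrixOrder

set_option maxHeartbeats 1000000

-- conjugation preserves PSD (real transpose version)
lemma myConj {n m : ℕ} {D : Matrix (Fin n) (Fin n) ℝ} (hD : D.PosSemidef)
    (B : Matrix (Fin m) (Fin n) ℝ) : (B * D * Bᵀ).PosSemidef := by
  have := hD.mul_mul_conjTranspose_same B
  rwa [conjTranspose_eq_transpose_of_trivial] at this

lemma myConj' {n m : ℕ} {D : Matrix (Fin n) (Fin n) ℝ} (hD : D.PosSemidef)
    (B : Matrix (Fin n) (Fin m) ℝ) : (Bᵀ * D * B).PosSemidef := by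
  have := hD.conjTranspose_mul_mul_same B
  rwa [conjTranspose_eq_transpose_of_trivial] at this

lemma psd_isUnit_posDef {n : ℕ} {K : Matrix (Fin n) (Fin n) ℝ}
    (hK : K.PosSemidef) (hu : IsUnit K) : K.PosDef := by
  refine Matrix.PosDef.of_dotProduct_mulVec_pos hK.1 fun x hx => ?_
  have hKx : K *ᵥ x ≠ 0 := by
    intro h
    apply hx
    have hinj := Matrix.mulVec_injective_iff_isUnit.mpr hu
    have : K *ᵥ x = K *ᵥ 0 := by simp [h]
    exact hinj this
  rcases (hK.dotProduct_mulVec_nonneg x).lt_or_eq with h | h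
  · exact h
  · exact absurd ((hK.dotProduct_mulVec_zero_iff x).mp h.symm) hKx

lemma sqrt_isUnit {n : ℕ} {Q : Matrix (Fin n) (Fin n) ℝ} (hQ : Q.PosDef) :
    IsUnit (CFC.sqrt Q) := by
  rw [Matrix.isUnit_iff_isUnit_det]
  have h : (CFC.sqrt Q).det * (CFC.sqrt Q).det = Q.det := by
    rw [← Matrix.det_mul, CFC.sqrt_mul_sqrt_self Q hQ.posSemidef.nonneg]
  have : Q.det ≠ 0 := hQ.det_pos.ne'
  exact (mul_ne_zero_iff.mp (h ▸ this)).1.isUnit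

-- step: M PD, 1 - M PSD ⇒ M⁻¹ - 1 PSD
lemma aux_one_sub {n : ℕ} {M : Matrix (Fin n) (Fin n) ℝ} (hM : M.PosDef)
    (h1 : ((1 : Matrix (Fin n) (Fin n) ℝ) - M).PosSemidef) : (M⁻¹ - 1).PosSemidef := by
  set U := CFC.sqrt M with hUdef
  have hU : U.PosSemidef := (CFC.sqrt_nonneg M).posSemidef
  have hUU : U * U = M := CFC.sqrt_mul_sqrt_self M hM.posSemidef.nonneg
  have hUu : IsUnit U := sqrt_isUnit hM
  have hUsymm : Uᵀ = U := by
    rw [← conjTranspose_eq_transpose_of_trivial]; exact hU.1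
  have hinvT : (U⁻¹)ᵀ = U⁻¹ := by rw [Matrix.transpose_nonsing_inv, hUsymm]
  have key : U⁻¹ * (1 - M) * (U⁻¹)ᵀ = M⁻¹ - 1 := by
    have hinst := hUu.invertible
    rw [hinvT, Matrix.mul_sub, Matrix.mul_one, Matrix.sub_mul, ← hUU,
      ← Matrix.mul_inv_rev]
    congr 1
    rw [Matrix.mul_assoc, Matrix.mul_assoc, Matrix.mul_inv_of_invertible,
      Matrix.mul_one, Matrix.inv_mul_of_invertible]
  exact key ▸ myConj h1 U⁻¹

lemma inv_antitone {n : ℕ} {P Q : Matrix (Fin n) (Fin n) ℝ}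
    (hP : P.PosDef) (hQ : Q.PosDef) (h : (Q - P).PosSemidef) :
    (P⁻¹ - Q⁻¹).PosSemidef := by
  set T := CFC.sqrt Q with hTdef
  have hT : T.PosSemidef := (CFC.sqrt_nonneg Q).posSemidef
  have hTT : T * T = Q := CFC.sqrt_mul_sqrt_self Q hQ.posSemidef.nonneg
  have hTu : IsUnit T := sqrt_isUnit hQ
  have hinst := hTu.invertible
  have hTsymm : Tᵀ = T := by
    rw [← conjTranspose_eq_transpose_of_trivial]; exact hT.1
  have hinvT : (T⁻¹)ᵀ = T⁻¹ := by rw [Matrix.transpose_nonsing_inv, hTsymm]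
  set M := T⁻¹ * P * T⁻¹ with hMdef
  have hMeq : T⁻¹ * P * (T⁻¹)ᵀ = M := by rw [hinvT]
  have hconjQ : T⁻¹ * Q * T⁻¹ = 1 := by
    rw [← hTT, ← Matrix.mul_assoc, Matrix.mul_assoc (T⁻¹ * T),
      Matrix.mul_inv_of_invertible, Matrix.inv_mul_of_invertible, Matrix.one_mul]
  have h1 : ((1 : Matrix (Fin n) (Fin n) ℝ) - M).PosSemidef := by
    have := myConj h T⁻¹
    rwa [hinvT, Matrix.mul_sub, Matrix.sub_mul, hconjQ, ← hMdef] at this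
  have hMu : IsUnit M := by
    rw [hMdef]
    exact ((Matrix.isUnit_nonsing_inv_iff.2 hTu).mul hP.isUnit).mul
      (Matrix.isUnit_nonsing_inv_iff.2 hTu)
  have hMpd : M.PosDef := by
    refine psd_isUnit_posDef ?_ hMu
    have := myConj hP.posSemidef T⁻¹
    rwa [hinvT, ← hMdef] at this
  have h2 := aux_one_sub hMpd h1
  have hMinv : M⁻¹ = T * P⁻¹ * T := by
    rw [hMdef, Matrix.mul_inv_rev, Matrix.mul_inv_rev, Matrix.inv_inv_of_invertible,
      ← Matrix.mul_assoc]
  have e1 : T⁻¹ * (M⁻¹ - 1) * T⁻¹ = P⁻¹ - Q⁻¹ := by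
    rw [hMinv, Matrix.mul_sub, Matrix.sub_mul, Matrix.mul_one]
    congr 1
    · rw [← Matrix.mul_assoc, ← Matrix.mul_assoc, Matrix.inv_mul_of_invertible,
        Matrix.one_mul, Matrix.mul_assoc, Matrix.mul_inv_of_invertible, Matrix.mul_one]
    · rw [← Matrix.mul_inv_rev, hTT]
  have := myConj h2 T⁻¹
  rwa [hinvT, e1] at this

lemma info_filter {n m : ℕ} {S : Matrix (Fin n) (Fin n) ℝ} (C : Matrix (Fin m) (Fin n) ℝ)
    {R : Matrix (Fin m) (Fin m) ℝ} (hS : S.PosDef) (hR : R.PosDef) :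
    S - S * Cᵀ * (C * S * Cᵀ + R)⁻¹ * C * S = (S⁻¹ + Cᵀ * R⁻¹ * C)⁻¹ := by
  set M := C * S * Cᵀ + R with hMdef
  have hCSC : (C * S * Cᵀ).PosSemidef := myConj hS.posSemidef C
  have hM : M.PosDef := Matrix.PosDef.posSemidef_add hCSC hR
  have hMinst := hM.isUnit.invertible
  have hSinst := hS.isUnit.invertible
  have hRinst := hR.isUnit.invertible
  have key : M⁻¹ + M⁻¹ * (C * S * Cᵀ) * R⁻¹ = R⁻¹ := by
    calc M⁻¹ + M⁻¹ * (C * S * Cᵀ) * R⁻¹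
        = M⁻¹ * R * R⁻¹ + M⁻¹ * (C * S * Cᵀ) * R⁻¹ := by
          rw [Matrix.mul_assoc M⁻¹ R R⁻¹, Matrix.mul_inv_of_invertible, Matrix.mul_one]
      _ = M⁻¹ * (C * S * Cᵀ + R) * R⁻¹ := by
          rw [Matrix.mul_add, Matrix.add_mul, add_comm]
      _ = R⁻¹ := by rw [← hMdef, Matrix.inv_mul_of_invertible, Matrix.one_mul]
  have key2 : S * (Cᵀ * (M⁻¹ * C)) + S * (Cᵀ * (M⁻¹ * (C * (S * (Cᵀ * (R⁻¹ * C)))))) =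
      S * (Cᵀ * (R⁻¹ * C)) := by
    have h1 := congrArg (fun X => S * Cᵀ * X * C) key
    simp only [Matrix.mul_add, Matrix.add_mul, Matrix.mul_assoc] at h1
    exact h1
  have prod : (S - S * Cᵀ * M⁻¹ * C * S) * (S⁻¹ + Cᵀ * R⁻¹ * C) = 1 := by
    simp only [Matrix.sub_mul, Matrix.mul_add, Matrix.mul_assoc,
      Matrix.mul_inv_of_invertible, Matrix.mul_one]
    nth_rewrite 1 [← key2]
    abel
  exact (Matrix.inv_eq_left_inv prod).symm


/-- The one-step Riccati (Kalman prediction-update) map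
`𝓡(S) = A (S − S Cᵀ (C S Cᵀ + R)⁻¹ C S) Aᵀ + Q`. -/
noncomputable def riccatiMap {X Y : ℕ}
    (A : Matrix (Fin X) (Fin X) ℝ) (C : Matrix (Fin Y) (Fin X) ℝ)
    (R : Matrix (Fin Y) (Fin Y) ℝ) (Q : Matrix (Fin X) (Fin X) ℝ)
    (S : Matrix (Fin X) (Fin X) ℝ) : Matrix (Fin X) (Fin X) ℝ :=
  A * (S - S * Cᵀ * (C * S * Cᵀ + R)⁻¹ * C * S) * Aᵀ + Q

/-- **Monotonicity of the Riccati/Kalman update in the prior covariance.**  For `R`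
symmetric positive definite, `Q` symmetric positive semidefinite and arbitrary `A`,
`C`, the Riccati map `𝓡(S) = A (S − S Cᵀ (C S Cᵀ + R)⁻¹ C S) Aᵀ + Q` is monotone on
positive definite matrices with respect to the Loewner order: `S₁ ⪯ S₂` implies
`𝓡(S₁) ⪯ 𝓡(S₂)`. -/
theorem riccati_map_monotone {X Y : ℕ}
    (A : Matrix (Fin X) (Fin X) ℝ) (C : Matrix (Fin Y) (Fin X) ℝ)
    (R : Matrix (Fin Y) (Fin Y) ℝ) (Q : Matrix (Fin X) (Fin X) ℝ)
    (hR : R.PosDef) (hQ : Q.PosSemidef)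
    (S₁ S₂ : Matrix (Fin X) (Fin X) ℝ)
    (hS₁ : S₁.PosDef) (hS₂ : S₂.PosDef)
    (h12 : (S₂ - S₁).PosSemidef) :
    (riccatiMap A C R Q S₂ - riccatiMap A C R Q S₁).PosSemidef := by
  have hE : (Cᵀ * R⁻¹ * C).PosSemidef := myConj' hR.inv.posSemidef C
  have hN₁ : (S₁⁻¹ + Cᵀ * R⁻¹ * C).PosDef := hS₁.inv.add_posSemidef hE
  have hN₂ : (S₂⁻¹ + Cᵀ * R⁻¹ * C).PosDef := hS₂.inv.add_posSemidef hE
  have hinv : (S₁⁻¹ - S₂⁻¹).PosSemidef := inv_antitone hS₁ hS₂ h12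
  have hdN : ((S₁⁻¹ + Cᵀ * R⁻¹ * C) - (S₂⁻¹ + Cᵀ * R⁻¹ * C)).PosSemidef := by
    rwa [add_sub_add_right_eq_sub]
  have hK : ((S₂⁻¹ + Cᵀ * R⁻¹ * C)⁻¹ - (S₁⁻¹ + Cᵀ * R⁻¹ * C)⁻¹).PosSemidef :=
    inv_antitone hN₂ hN₁ hdN
  have e : riccatiMap A C R Q S₂ - riccatiMap A C R Q S₁ =
      A * ((S₂⁻¹ + Cᵀ * R⁻¹ * C)⁻¹ - (S₁⁻¹ + Cᵀ * R⁻¹ * C)⁻¹) * Aᵀ := by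
    rw [riccatiMap, riccatiMap, info_filter C hS₁ hR, info_filter C hS₂ hR,
      add_sub_add_right_eq_sub, Matrix.mul_sub, Matrix.sub_mul]
  rw [e]
  exact myConj hK A
end

section
/- (Slow learning in Gaussian social learning / cascaded Kalman filters: the k^{1/3} law.) Fix ρ > 0 (precision of each private observation of a static Gaussian state) and σ > 0 (standard deviation of the noise with which each agent's conditional-mean estimate is observed). Define the public precision recursion P_{k+1} = P_k + γ_k² / (γ_k²/ρ + σ²), where γ_k = ρ/(ρ + P_k), with arbitrary initial precision P_0 > 0. Then P_k → ∞ and lim_{k→∞} P_k / k^{1/3} = (3ρ²/σ²)^{1/3}. Consequently the public variance Σ_k = 1/P_k satisfies lim_{k→∞} k^{1/3} Σ_k = (σ²/(3ρ²))^{1/3}; in particular Σ_k = Θ(k^{-1/3}) rather than Θ(k^{-1}), and the leading-order rate k^{-1/3} is the same for every σ > 0. -/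
open Filter Finset

/-- **Slow learning in Gaussian social learning / cascaded Kalman filters: the
`k^{1/3}` law.**  For the public precision recursion
`P (k+1) = P k + γ_k² / (γ_k²/ρ + σ²)` with `γ_k = ρ/(ρ + P k)`, precision `ρ > 0` of
each private observation, observation-noise standard deviation `σ > 0` and any initial
precision `P 0 > 0`:  `P k → ∞`, `P k / k^{1/3} → (3ρ²/σ²)^{1/3}`, and the public
variance `Σ_k = 1 / P k` satisfies `k^{1/3} Σ_k → (σ²/(3ρ²))^{1/3}`. -/
theorem slow_learning_cube_root_law (ρ σ : ℝ) (hρ : 0 < ρ) (hσ : 0 < σ)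
    (P : ℕ → ℝ) (hP0 : 0 < P 0)
    (hrec : ∀ k, P (k+1) = P k +
      (ρ / (ρ + P k))^2 / ((ρ / (ρ + P k))^2 / ρ + σ^2)) :
    Tendsto P atTop atTop ∧
    Tendsto (fun k : ℕ => P k / (k : ℝ) ^ ((1:ℝ)/3)) atTop
      (nhds ((3 * ρ^2 / σ^2) ^ ((1:ℝ)/3))) ∧
    Tendsto (fun k : ℕ => (k : ℝ) ^ ((1:ℝ)/3) * (1 / P k)) atTop
      (nhds ((σ^2 / (3 * ρ^2)) ^ ((1:ℝ)/3))) := by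
  set γ : ℕ → ℝ := fun k => ρ / (ρ + P k) with hγdef
  set D : ℕ → ℝ := fun k => (γ k)^2 / ((γ k)^2 / ρ + σ^2) with hDdef
  have hden : ∀ k, 0 < (γ k)^2 / ρ + σ^2 := fun k => by positivity
  have hDnonneg : ∀ k, 0 ≤ D k := fun k => by
    exact div_nonneg (sq_nonneg _) (hden k).le
  have hPpos : ∀ k, 0 < P k := by
    intro k
    induction k with
    | zero => exact hP0
    | succ n ih =>
      rw [hrec n]
      have := hDnonneg n
      simp only [hDdef, hγdef] at this ⊢
      linarith
  have hDpos : ∀ k, 0 < D k := by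
    intro k
    apply div_pos _ (hden k)
    have hγpos : 0 < γ k := div_pos hρ (by have := hPpos k; positivity)
    positivity
  have hrec' : ∀ k, P (k+1) = P k + D k := fun k => hrec k
  have hmono : Monotone P := by
    apply monotone_nat_of_le_succ
    intro n
    rw [hrec' n]
    linarith [hDnonneg n]
  -- P tends to infinity
  have htop : Tendsto P atTop atTop := by
    rcases tendsto_of_monotone hmono with h | ⟨L, hL⟩
    · exact h
    · exfalso
      have hLpos : 0 < L :=
        lt_of_lt_of_le hP0 (ge_of_tendsto' hL (fun k => hmono (Nat.zero_le k)))
      have hL1 : Tendsto (fun k => P (k+1)) atTop (nhds L) :=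
        hL.comp (tendsto_add_atTop_nat 1)
      have hD0 : Tendsto D atTop (nhds 0) := by
        have := hL1.sub hL
        simp only [sub_self] at this
        apply this.congr
        intro k
        rw [hrec' k]; ring
      have hρL : ρ + L ≠ 0 := by positivity
      have h1 : Tendsto (fun k => ρ + P k) atTop (nhds (ρ + L)) :=
        tendsto_const_nhds.add hL
      have h2 : Tendsto γ atTop (nhds (ρ / (ρ + L))) :=
        tendsto_const_nhds.div h1 hρL
      have h3 : Tendsto (fun k => (γ k)^2) atTop (nhds ((ρ / (ρ + L))^2)) := h2.pow 2
      have hden' : (ρ / (ρ + L))^2 / ρ + σ^2 ≠ 0 := by positivity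
      have h4 : Tendsto D atTop
          (nhds ((ρ / (ρ + L))^2 / ((ρ / (ρ + L))^2 / ρ + σ^2))) :=
        h3.div ((h3.div_const ρ).add tendsto_const_nhds) hden'
      have heq := tendsto_nhds_unique hD0 h4
      have : 0 < (ρ / (ρ + L))^2 / ((ρ / (ρ + L))^2 / ρ + σ^2) := by positivity
      linarith [heq ▸ this]
  -- γ → 0
  have hsum : Tendsto (fun k => ρ + P k) atTop atTop :=
    tendsto_atTop_add_const_left _ ρ htop
  have hγ0 : Tendsto γ atTop (nhds 0) := by
    have := hsum.inv_tendsto_atTop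
    have h := this.const_mul ρ
    rw [mul_zero] at h
    apply h.congr
    intro k
    simp only [Pi.inv_apply, hγdef, div_eq_mul_inv]
  -- P k * γ k → ρ
  have hPγ : Tendsto (fun k => P k * γ k) atTop (nhds ρ) := by
    have h : Tendsto (fun k => ρ * (1 - γ k)) atTop (nhds ρ) := by
      have := ((tendsto_const_nhds (x := (1:ℝ))).sub hγ0).const_mul ρ
      simpa using this
    apply h.congr
    intro k
    have hne : ρ + P k ≠ 0 := by have := hPpos k; positivity
    simp only [hγdef]
    field_simp
    ring
  -- denominator → σ²
  have hdenlim : Tendsto (fun k => (γ k)^2 / ρ + σ^2) atTop (nhds (σ^2)) := by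
    have := ((hγ0.pow 2).div_const ρ).add (tendsto_const_nhds (x := σ^2))
    simpa using this
  have hσ2 : (σ:ℝ)^2 ≠ 0 := by positivity
  -- key limits
  have hA : Tendsto (fun k => (P k)^2 * D k) atTop (nhds (ρ^2 / σ^2)) := by
    have h := (hPγ.pow 2).div hdenlim hσ2
    apply h.congr
    intro k
    simp only [hDdef, Pi.div_apply]
    ring
  have hB : Tendsto (fun k => P k * D k) atTop (nhds 0) := by
    have h := (hPγ.mul hγ0).div hdenlim hσ2
    simp only [mul_zero, zero_div] at h
    apply h.congr
    intro k
    simp only [hDdef, Pi.div_apply]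
    ring
  have hD0 : Tendsto D atTop (nhds 0) := by
    have h := (hγ0.pow 2).div hdenlim hσ2
    simp only [ne_eq, OfNat.ofNat_ne_zero, not_false_eq_true, zero_pow, zero_div] at h
    convert h using 2
    norm_num
    rfl
  -- cube differences
  have he : Tendsto (fun k => (P (k+1))^3 - (P k)^3) atTop (nhds (3 * ρ^2 / σ^2)) := by
    have h := ((hA.const_mul 3).add ((hB.const_mul 3).mul hD0)).add (hD0.pow 3)
    have : 3 * (ρ^2 / σ^2) + 3 * 0 * 0 + 0^3 = 3 * ρ^2 / σ^2 := by ring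
    rw [this] at h
    apply h.congr
    intro k
    rw [hrec' k]
    ring
  -- Cesàro
  have hc : Tendsto (fun n : ℕ => (P n)^3 / n) atTop (nhds (3 * ρ^2 / σ^2)) := by
    have hces := he.cesaro
    have htel : ∀ n : ℕ, ∑ i ∈ Finset.range n, ((P (i+1))^3 - (P i)^3)
        = (P n)^3 - (P 0)^3 := fun n => Finset.sum_range_sub (fun i => (P i)^3) n
    have h0 : Tendsto (fun n : ℕ => (P 0)^3 / (n:ℝ)) atTop (nhds 0) :=
      tendsto_const_div_atTop_nhds_zero_nat _
    have h := hces.add h0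
    rw [add_zero] at h
    apply h.congr
    intro n
    rw [htel n]
    ring
  have hcpos : 0 < 3 * ρ^2 / σ^2 := by positivity
  -- second limit
  have hmain : Tendsto (fun k : ℕ => P k / (k : ℝ) ^ ((1:ℝ)/3)) atTop
      (nhds ((3 * ρ^2 / σ^2) ^ ((1:ℝ)/3))) := by
    have h := hc.rpow_const (p := (1:ℝ)/3) (Or.inr (by norm_num))
    apply h.congr'
    filter_upwards [eventually_ge_atTop 1] with n hn
    have hn' : (0:ℝ) < n := by exact_mod_cast hn
    have hPn := hPpos n
    rw [Real.div_rpow (by positivity) hn'.le]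
    congr 1
    rw [← Real.rpow_natCast (P n) 3, ← Real.rpow_mul hPn.le]
    norm_num
  refine ⟨htop, hmain, ?_⟩
  -- third limit
  have hne : (3 * ρ^2 / σ^2) ^ ((1:ℝ)/3) ≠ 0 := by
    exact (Real.rpow_pos_of_pos hcpos _).ne'
  have h := hmain.inv₀ hne
  have hval : ((3 * ρ^2 / σ^2) ^ ((1:ℝ)/3))⁻¹ = (σ^2 / (3 * ρ^2)) ^ ((1:ℝ)/3) := by
    rw [← Real.inv_rpow hcpos.le, inv_div]
  rw [hval] at h
  apply h.congr'
  filter_upwards [eventually_ge_atTop 1] with n hn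
  rw [inv_div, div_eq_mul_one_div]
end

section
/- (Theorem 2, sequential localization game: the asymptotic covariance is twice the classical one.) Consider scalar Bayesian localization of a static Gaussian state x₀ in which, at even times k, we take a direct observation of x₀ with Gaussian noise of unit variance (adding precision 1 to our posterior), while at odd times k we only intercept the adversary's action, yielding the effective observation z_k = x₀ + ((1−ψ_k)/ψ_k) ε_{k−1} + v_k + ε_k/ψ_k of (eq. 13), where v_k has unit variance, ε_{k−1}, ε_k are independent with variance σ_a² > 0, and ψ_k ∈ (0,1) is the adversary's Kalman gain, which satisfies k·ψ_k → c for some constant c > 0. Then our posterior precision P_k = P_0 + Σ_{j ≤ k, j even} 1 + Σ_{j ≤ k, j odd} r_j^{-1}, with r_j = ((1−ψ_j)/ψ_j)² σ_a² + 1 + σ_a²/ψ_j² the effective noise variance at odd times, satisfies P_k / k → 1/2; equivalently the covariance Σ_k = 1/P_k of our estimate of x₀ satisfies lim_{k→∞} k Σ_k = 2. Moreover this limit is independent of σ_a² as long as σ_a² > 0. -/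
open Filter

private lemma even_count_Icc (k : ℕ) :
    ∑ j ∈ Finset.Icc 1 k, (if Even j then (1:ℝ) else 0) = (k / 2 : ℕ) := by
  induction k with
  | zero => simp
  | succ k ih =>
    rw [Finset.sum_Icc_succ_top (by omega), ih]
    by_cases h : Even (k + 1)
    · rw [if_pos h]
      have : (k + 1) / 2 = k / 2 + 1 := by
        obtain ⟨m, hm⟩ := h; omega
      rw [this]; push_cast; ring
    · rw [if_neg h]
      have : (k + 1) / 2 = k / 2 := by
        rw [Nat.even_add_one, not_not] at h
        obtain ⟨m, hm⟩ := h; omega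
      rw [this]; ring

private lemma half_floor_tendsto :
    Tendsto (fun k : ℕ => ((k / 2 : ℕ) : ℝ) / k) atTop (nhds (1/2)) := by
  have h1 : Tendsto (fun k : ℕ => 1/2 - ((k % 2 : ℕ) : ℝ) / (2 * k)) atTop (nhds (1/2)) := by
    have h0 : Tendsto (fun k : ℕ => ((k % 2 : ℕ) : ℝ) / (2 * k)) atTop (nhds 0) := by
      apply squeeze_zero' (g := fun k : ℕ => 1 / (k : ℝ))
      · filter_upwards [eventually_gt_atTop 0] with k hk
        positivity
      · filter_upwards [eventually_gt_atTop 0] with k hk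
        have hk' : (0:ℝ) < k := by exact_mod_cast hk
        rw [div_le_div_iff₀ (by positivity) hk']
        have : ((k % 2 : ℕ) : ℝ) ≤ 1 := by
          have := Nat.mod_lt k (show 0 < 2 by norm_num)
          exact_mod_cast Nat.lt_succ_iff.mp this
        nlinarith
      · exact tendsto_one_div_atTop_nhds_zero_nat
    simpa using (tendsto_const_nhds.sub h0)
  apply h1.congr'
  filter_upwards [eventually_gt_atTop 0] with k hk
  have hk' : (0:ℝ) < k := by exact_mod_cast hk
  have hdecomp : ((k / 2 : ℕ) : ℝ) = ((k : ℝ) - (k % 2 : ℕ)) / 2 := by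
    have : 2 * (k / 2) + k % 2 = k := Nat.div_add_mod k 2
    have h2 : (2:ℝ) * ((k / 2 : ℕ) : ℝ) + ((k % 2 : ℕ) : ℝ) = (k : ℝ) := by
      exact_mod_cast congrArg (Nat.cast : ℕ → ℝ) this
    linarith
  rw [hdecomp]
  field_simp

/-- **Theorem 2 (sequential localization game): the asymptotic covariance is twice the
classical one.**  At even times we take a direct unit-variance observation of the
static state (adding precision 1); at odd times we only intercept the adversary's
action, whose effective observation noise variance is
`r j = ((1−ψ j)/ψ j)² σa² + 1 + σa²/ψ j²`, where `ψ j ∈ (0,1)` is the adversary's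
Kalman gain with `j·ψ j → c > 0` and `σa² > 0` is the action-observation noise
variance.  Then the posterior precision
`P k = P 0 + Σ_{1 ≤ j ≤ k, j even} 1 + Σ_{1 ≤ j ≤ k, j odd} (r j)⁻¹`
satisfies `P k / k → 1/2`; equivalently the covariance `Σ_k = 1 / P k` satisfies
`k Σ_k → 2`, independently of `σa² > 0`. -/
theorem localization_game_twice_covariance (σa c P₀ : ℝ)
    (hσa : 0 < σa) (hc : 0 < c) (hP₀ : 0 < P₀)
    (ψ : ℕ → ℝ) (hψ : ∀ k, ψ k ∈ Set.Ioo (0:ℝ) 1)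
    (hgain : Tendsto (fun k : ℕ => (k : ℝ) * ψ k) atTop (nhds c))
    (r : ℕ → ℝ)
    (hr : ∀ k, r k = ((1 - ψ k) / ψ k)^2 * σa^2 + 1 + σa^2 / (ψ k)^2)
    (P : ℕ → ℝ)
    (hP : ∀ k, P k = P₀ + ∑ j ∈ Finset.Icc 1 k,
      (if Even j then (1:ℝ) else (r j)⁻¹)) :
    Tendsto (fun k : ℕ => P k / (k : ℝ)) atTop (nhds (1/2)) ∧
    Tendsto (fun k : ℕ => (k : ℝ) * (1 / P k)) atTop (nhds 2) := by
  -- basic facts about ψ and r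
  have hψpos : ∀ k, 0 < ψ k := fun k => (hψ k).1
  have hrpos : ∀ k, 0 < r k := by
    intro k
    rw [hr k]
    have := hψpos k
    positivity
  -- ψ k → 0
  have hψ0 : Tendsto ψ atTop (nhds 0) := by
    have := hgain.mul tendsto_one_div_atTop_nhds_zero_nat
    rw [mul_zero] at this
    apply this.congr'
    filter_upwards [eventually_gt_atTop 0] with k hk
    have hk' : (0:ℝ) < k := by exact_mod_cast hk
    field_simp
  -- (r k)⁻¹ → 0
  have hrinv0 : Tendsto (fun k => (r k)⁻¹) atTop (nhds 0) := by
    apply squeeze_zero (fun k => (inv_pos.mpr (hrpos k)).le)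
      (g := fun k => (ψ k)^2 / σa^2)
    · intro k
      have hψk := hψpos k
      have hle : σa^2 / (ψ k)^2 ≤ r k := by
        rw [hr k]; nlinarith [sq_nonneg ((1 - ψ k) / ψ k), sq_nonneg σa]
      have h1 : 0 < σa^2 / (ψ k)^2 := by positivity
      calc (r k)⁻¹ ≤ (σa^2 / (ψ k)^2)⁻¹ := by
            apply inv_anti₀ h1 hle
        _ = (ψ k)^2 / σa^2 := by rw [inv_div]
    · have : Tendsto (fun k => (ψ k)^2) atTop (nhds 0) := by
        simpa using hψ0.pow 2
      simpa using this.div_const (σa^2)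
  -- the odd part of the sum
  set q : ℕ → ℝ := fun j => if Even j then 0 else (r j)⁻¹ with hq
  have hq0 : Tendsto q atTop (nhds 0) := by
    apply squeeze_zero (g := fun k => (r k)⁻¹)
    · intro k
      by_cases h : Even k <;> simp [hq, h, (inv_pos.mpr (hrpos k)).le]
    · intro k
      by_cases h : Even k <;> simp [hq, h, (inv_pos.mpr (hrpos k)).le, le_refl]
    · exact hrinv0
  -- Cesàro: average of q over Icc 1 k tends to 0
  have hqavg : Tendsto (fun k : ℕ => (∑ j ∈ Finset.Icc 1 k, q j) / k) atTop (nhds 0) := by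
    have hshift : Tendsto (fun i : ℕ => q (1 + i)) atTop (nhds 0) := by
      have h := hq0.comp (tendsto_add_atTop_nat 1)
      simpa [Function.comp_def, Nat.add_comm] using h
    have := hshift.cesaro
    apply this.congr
    intro k
    rw [← Finset.Ico_add_one_right_eq_Icc]
    rw [Finset.sum_Ico_eq_sum_range, Nat.add_sub_cancel, inv_mul_eq_div]
  -- decompose the sum
  have hsum : ∀ k, P k = P₀ + ((k / 2 : ℕ) : ℝ) + ∑ j ∈ Finset.Icc 1 k, q j := by
    intro k
    rw [hP k, ← even_count_Icc k, add_assoc, ← Finset.sum_add_distrib]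
    congr 1
    apply Finset.sum_congr rfl
    intro j _
    by_cases h : Even j <;> simp [hq, h]
  -- main limit for P k / k
  have hmain : Tendsto (fun k : ℕ => P k / (k : ℝ)) atTop (nhds (1/2)) := by
    have hconst : Tendsto (fun k : ℕ => P₀ / (k : ℝ)) atTop (nhds 0) := by
      simpa using tendsto_const_nhds.div_atTop (tendsto_natCast_atTop_atTop (R := ℝ))
    have := (hconst.add half_floor_tendsto).add hqavg
    rw [zero_add, add_zero] at this
    apply this.congr'
    filter_upwards [eventually_gt_atTop 0] with k hk
    have hk' : ((k:ℝ)) ≠ 0 := by positivity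
    rw [hsum k]
    field_simp
  refine ⟨hmain, ?_⟩
  have h2 : Tendsto (fun k : ℕ => (P k / (k : ℝ))⁻¹) atTop (nhds ((1/2 : ℝ))⁻¹) :=
    hmain.inv₀ (by norm_num)
  norm_num at h2
  apply h2.congr
  intro k
  rw [mul_one_div]
end

section
/- (Optimal inverse filter recursion, eq. (4), finite-space version.) Let 𝒳, 𝒴, 𝒜 be finite sets and Π a finite set of probability mass functions on 𝒳. Let P(x, x') be a transition kernel on 𝒳 with initial distribution π₀ ∈ Π, B(x, y) an observation kernel from 𝒳 to 𝒴, G(π, a) an action kernel from Π to 𝒜, and T : Π × 𝒴 → Π a map with T(Π × 𝒴) ⊆ Π (the adversary's filter update). Define the joint probability of a trajectory (x_{0:N}, y_{1:N}, a_{1:N}) as π₀(x₀) ∏_{k=1}^{N} P(x_{k−1}, x_k) B(x_k, y_k) G(π_k, a_k), where π_k = T(π_{k−1}, y_k). Then for every k < N, every trajectory (x_{0:k+1}, a_{1:k+1}) of positive probability, and every π ∈ Π, the conditional probability α_{k+1}(π) = ℙ(π_{k+1} = π | a_{1:k+1}, x_{0:k+1}) satisfies the recursion α_{k+1}(π) =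 [ G(π, a_{k+1}) · Σ_{π' ∈ Π} Σ_{y ∈ 𝒴 : T(π', y) = π} B(x_{k+1}, y) α_k(π') ] / [ Σ_{π̄ ∈ Π} G(π̄, a_{k+1}) · Σ_{π' ∈ Π} Σ_{y ∈ 𝒴 : T(π', y) = π̄} B(x_{k+1}, y) α_k(π') ]. -/
open Finset

noncomputable section

/-- The adversary's belief after `k` observations `y : Fin k → Y`, obtained by
iterating the deterministic filter map `T` from the initial belief `π₀`
(`y i` is the observation `y_{i+1}`). -/
def belAt {Y Bel : Type*} (T : Bel → Y → Bel) (π₀ : Bel) :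
    (k : ℕ) → (Fin k → Y) → Bel
  | 0, _ => π₀
  | (k+1), y => T (belAt T π₀ k (fun i => y i.castSucc)) (y (Fin.last k))

/-- Joint probability of a trajectory `(x_{0:k}, y_{1:k}, a_{1:k})`:
`π₀(x₀) ∏_{j=1}^{k} P(x_{j−1},x_j) B(x_j,y_j) G(π_j,a_j)` with
`π_j = T(π_{j−1}, y_j)`.  Here `val b` is the pmf on `X` represented by the
belief `b`, and `y i` encodes `y_{i+1}`. -/
def jointP {X Y A Bel : Type*} [Fintype Y]
    (val : Bel → X → ℝ) (Pk : X → X → ℝ) (Bk : X → Y → ℝ) (G : Bel → A → ℝ)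
    (T : Bel → Y → Bel) (π₀ : Bel)
    (k : ℕ) (x : ℕ → X) (y : Fin k → Y) (a : ℕ → A) : ℝ :=
  val π₀ (x 0) * ∏ i : Fin k,
    (Pk (x i.val) (x (i.val + 1)) * Bk (x (i.val + 1)) (y i) *
      G (belAt T π₀ (i.val + 1) (fun j => y (Fin.castLE i.isLt j))) (a (i.val + 1)))

/-- Probability of observing `(x_{0:k}, a_{1:k})`: the `y`-marginal of `jointP`. -/
def probXA {X Y A Bel : Type*} [Fintype Y]
    (val : Bel → X → ℝ) (Pk : X → X → ℝ) (Bk : X → Y → ℝ) (G : Bel → A → ℝ)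
    (T : Bel → Y → Bel) (π₀ : Bel) (k : ℕ) (x : ℕ → X) (a : ℕ → A) : ℝ :=
  ∑ y : Fin k → Y, jointP val Pk Bk G T π₀ k x y a

/-- Probability of `(x_{0:k}, a_{1:k})` jointly with the event `π_k = π`. -/
def probXABel {X Y A Bel : Type*} [Fintype Y] [DecidableEq Bel]
    (val : Bel → X → ℝ) (Pk : X → X → ℝ) (Bk : X → Y → ℝ) (G : Bel → A → ℝ)
    (T : Bel → Y → Bel) (π₀ : Bel) (k : ℕ) (x : ℕ → X) (a : ℕ → A) (π : Bel) : ℝ :=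
  ∑ y : Fin k → Y,
    if belAt T π₀ k y = π then jointP val Pk Bk G T π₀ k x y a else 0

lemma snoc_comp_castSucc' {Y : Type*} {k : ℕ} (y' : Fin k → Y) (yl : Y) :
    (fun i : Fin k => (Fin.snoc y' yl : Fin (k+1) → Y) i.castSucc) = y' := by
  funext i; simp

lemma belAt_snoc {Y Bel : Type*} (T : Bel → Y → Bel) (π₀ : Bel) (k : ℕ)
    (y' : Fin k → Y) (yl : Y) :
    belAt T π₀ (k+1) (Fin.snoc y' yl) = T (belAt T π₀ k y') yl := by
  rw [belAt, Fin.snoc_last, snoc_comp_castSucc']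

lemma jointP_snoc {X Y A Bel : Type*} [Fintype Y]
    (val : Bel → X → ℝ) (Pk : X → X → ℝ) (Bk : X → Y → ℝ) (G : Bel → A → ℝ)
    (T : Bel → Y → Bel) (π₀ : Bel)
    (k : ℕ) (x : ℕ → X) (y' : Fin k → Y) (yl : Y) (a : ℕ → A) :
    jointP val Pk Bk G T π₀ (k+1) x (Fin.snoc y' yl) a =
      jointP val Pk Bk G T π₀ k x y' a *
        (Pk (x k) (x (k+1)) * Bk (x (k+1)) yl *
          G (T (belAt T π₀ k y') yl) (a (k+1))) := by
  unfold jointP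
  rw [Fin.prod_univ_castSucc, ← mul_assoc]
  set f : Fin (k+1) → Y := Fin.snoc y' yl with hf
  have hA : ∀ i : Fin k,
      (Pk (x ((i.castSucc : Fin (k+1))).val) (x ((i.castSucc : Fin (k+1)).val + 1)) *
        Bk (x ((i.castSucc : Fin (k+1)).val + 1)) (f i.castSucc) *
        G (belAt T π₀ ((i.castSucc : Fin (k+1)).val + 1)
          (fun j => f (Fin.castLE (i.castSucc : Fin (k+1)).isLt j))) (a ((i.castSucc : Fin (k+1)).val + 1))) =
      (Pk (x i.val) (x (i.val + 1)) * Bk (x (i.val + 1)) (y' i) *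
        G (belAt T π₀ (i.val + 1) (fun j => y' (Fin.castLE i.isLt j))) (a (i.val + 1))) := by
    intro i
    have h1 : f i.castSucc = y' i := by rw [hf]; simp
    have h2 : (fun j : Fin ((i.castSucc : Fin (k+1)).val + 1) =>
        f (Fin.castLE (i.castSucc : Fin (k+1)).isLt j)) =
        (fun j => y' (Fin.castLE i.isLt j)) := by
      funext j
      rw [hf]
      have hj : (j : ℕ) < k := lt_of_le_of_lt (Nat.lt_succ_iff.mp j.isLt) i.isLt
      simp [Fin.snoc, hj, Fin.castLT, Fin.castLE]
    rw [h1, h2]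
    simp only [Fin.coe_castSucc]
  rw [Finset.prod_congr rfl (fun i _ => hA i)]
  have h3 : (fun j : Fin (k+1) => f (Fin.castLE (le_refl (k+1)) j)) = f :=
    funext fun j => congrArg f (Fin.ext rfl)
  simp only [Fin.val_last]
  rw [h3, hf, belAt_snoc, Fin.snoc_last]

/-- Equivalence `(Fin k → Y) × Y ≃ (Fin (k+1) → Y)` given by `Fin.snoc`. -/
def snocE (Y : Type*) (k : ℕ) : ((Fin k → Y) × Y) ≃ (Fin (k+1) → Y) where
  toFun p := Fin.snoc p.1 p.2
  invFun y := (fun i => y i.castSucc, y (Fin.last k))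
  left_inv p := by
    refine Prod.ext ?_ ?_
    · funext i; simp
    · simp
  right_inv y := Fin.snoc_init_self y

lemma sum_fiber {ι B : Type*} [Fintype ι] [Fintype B] [DecidableEq B]
    (b : ι → B) (g : ι → ℝ) :
    ∑ i, g i = ∑ β, ∑ i, if b i = β then g i else 0 := by
  rw [Finset.sum_comm]
  apply Finset.sum_congr rfl
  intro i _
  simp

lemma jointP_nonneg {X Y A Bel : Type*} [Fintype Y]
    (val : Bel → X → ℝ) (Pk : X → X → ℝ) (Bk : X → Y → ℝ) (G : Bel → A → ℝ)
    (T : Bel → Y → Bel) (π₀ : Bel)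
    (hval : ∀ b x, 0 ≤ val b x) (hPk : ∀ x x', 0 ≤ Pk x x')
    (hBk : ∀ x y, 0 ≤ Bk x y) (hG : ∀ b a, 0 ≤ G b a)
    (k : ℕ) (x : ℕ → X) (y : Fin k → Y) (a : ℕ → A) :
    0 ≤ jointP val Pk Bk G T π₀ k x y a := by
  refine mul_nonneg (hval _ _) (Finset.prod_nonneg fun i _ => ?_)
  exact mul_nonneg (mul_nonneg (hPk _ _) (hBk _ _)) (hG _ _)

lemma probXABel_nonneg {X Y A Bel : Type*} [Fintype Y] [DecidableEq Bel]
    (val : Bel → X → ℝ) (Pk : X → X → ℝ) (Bk : X → Y → ℝ) (G : Bel → A → ℝ)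
    (T : Bel → Y → Bel) (π₀ : Bel)
    (hval : ∀ b x, 0 ≤ val b x) (hPk : ∀ x x', 0 ≤ Pk x x')
    (hBk : ∀ x y, 0 ≤ Bk x y) (hG : ∀ b a, 0 ≤ G b a)
    (k : ℕ) (x : ℕ → X) (a : ℕ → A) (π : Bel) :
    0 ≤ probXABel val Pk Bk G T π₀ k x a π := by
  refine Finset.sum_nonneg fun y _ => ?_
  split
  · exact jointP_nonneg val Pk Bk G T π₀ hval hPk hBk hG k x y a
  · exact le_refl 0

lemma probXA_eq_sum {X Y A Bel : Type*} [Fintype Y] [Fintype Bel] [DecidableEq Bel]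
    (val : Bel → X → ℝ) (Pk : X → X → ℝ) (Bk : X → Y → ℝ) (G : Bel → A → ℝ)
    (T : Bel → Y → Bel) (π₀ : Bel) (k : ℕ) (x : ℕ → X) (a : ℕ → A) :
    probXA val Pk Bk G T π₀ k x a = ∑ π : Bel, probXABel val Pk Bk G T π₀ k x a π := by
  unfold probXA probXABel
  exact sum_fiber (belAt T π₀ k) _

/-- Key recursion for the joint probability of `(x_{0:k+1}, a_{1:k+1}, π_{k+1} = π)`. -/
lemma probXABel_succ {X Y A Bel : Type*} [Fintype Y] [Fintype Bel] [DecidableEq Bel]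
    (val : Bel → X → ℝ) (Pk : X → X → ℝ) (Bk : X → Y → ℝ) (G : Bel → A → ℝ)
    (T : Bel → Y → Bel) (π₀ : Bel) (k : ℕ) (x : ℕ → X) (a : ℕ → A) (π : Bel) :
    probXABel val Pk Bk G T π₀ (k+1) x a π =
      Pk (x k) (x (k+1)) * (G π (a (k+1)) *
        ∑ π' : Bel, (∑ y : Y, if T π' y = π then Bk (x (k+1)) y else 0) *
          probXABel val Pk Bk G T π₀ k x a π') := by
  unfold probXABel
  rw [← Equiv.sum_comp (snocE Y k), Fintype.sum_prod_type]
  have step1 : ∀ (y' : Fin k → Y) (yl : Y),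
      (if belAt T π₀ (k+1) ((snocE Y k) (y', yl)) = π
        then jointP val Pk Bk G T π₀ (k+1) x ((snocE Y k) (y', yl)) a else 0) =
      (jointP val Pk Bk G T π₀ k x y' a * Pk (x k) (x (k+1)) * G π (a (k+1))) *
        (if T (belAt T π₀ k y') yl = π then Bk (x (k+1)) yl else 0) := by
    intro y' yl
    show (if belAt T π₀ (k+1) (Fin.snoc y' yl) = π
        then jointP val Pk Bk G T π₀ (k+1) x (Fin.snoc y' yl) a else 0) = _
    rw [belAt_snoc, jointP_snoc]
    by_cases h : T (belAt T π₀ k y') yl = π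
    · rw [if_pos h, if_pos h, h]; ring
    · rw [if_neg h, if_neg h, mul_zero]
  calc ∑ y' : Fin k → Y, ∑ yl : Y,
        (if belAt T π₀ (k+1) ((snocE Y k) (y', yl)) = π
          then jointP val Pk Bk G T π₀ (k+1) x ((snocE Y k) (y', yl)) a else 0)
      = ∑ y' : Fin k → Y,
          (jointP val Pk Bk G T π₀ k x y' a * Pk (x k) (x (k+1)) * G π (a (k+1))) *
            (∑ yl : Y, if T (belAt T π₀ k y') yl = π then Bk (x (k+1)) yl else 0) := by
        refine Finset.sum_congr rfl fun y' _ => ?_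
        rw [Finset.mul_sum]
        exact Finset.sum_congr rfl fun yl _ => step1 y' yl
    _ = ∑ π' : Bel, ∑ y' : Fin k → Y,
          if belAt T π₀ k y' = π' then
            (jointP val Pk Bk G T π₀ k x y' a * Pk (x k) (x (k+1)) * G π (a (k+1))) *
              (∑ yl : Y, if T (belAt T π₀ k y') yl = π then Bk (x (k+1)) yl else 0)
          else 0 := sum_fiber (belAt T π₀ k) _
    _ = ∑ π' : Bel,
          (Pk (x k) (x (k+1)) * G π (a (k+1)) *
            (∑ yl : Y, if T π' yl = π then Bk (x (k+1)) yl else 0)) *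
          ∑ y' : Fin k → Y,
            (if belAt T π₀ k y' = π' then jointP val Pk Bk G T π₀ k x y' a else 0) := by
        refine Finset.sum_congr rfl fun π' _ => ?_
        rw [Finset.mul_sum]
        refine Finset.sum_congr rfl fun y' _ => ?_
        by_cases h : belAt T π₀ k y' = π'
        · rw [if_pos h, if_pos h, h]; ring
        · rw [if_neg h, if_neg h, mul_zero]
    _ = Pk (x k) (x (k+1)) * (G π (a (k+1)) *
        ∑ π' : Bel, (∑ y : Y, if T π' y = π then Bk (x (k+1)) y else 0) *
          probXABel val Pk Bk G T π₀ k x a π') := by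
        rw [Finset.mul_sum, Finset.mul_sum]
        refine Finset.sum_congr rfl fun π' _ => ?_
        unfold probXABel
        ring

/-- **Optimal inverse filter recursion (eq. (4), finite-space version).**  For finite
`𝒳, 𝒴, 𝒜` and a finite set `Π` of beliefs (pmfs on `𝒳`, via `val`), with transition
kernel `Pk`, observation kernel `Bk`, action kernel `G` and filter map `T`, the
conditional probability `α_{k+1}(π) = ℙ(π_{k+1} = π ∣ a_{1:k+1}, x_{0:k+1})` of the
adversary's belief, given any trajectory `(x_{0:k+1}, a_{1:k+1})` of positive
probability with `k < N`, satisfies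
`α_{k+1}(π) = G(π,a_{k+1}) Σ_{π'} Σ_{y : T(π',y) = π} B(x_{k+1},y) α_k(π') /
  Σ_{π̄} G(π̄,a_{k+1}) Σ_{π'} Σ_{y : T(π',y) = π̄} B(x_{k+1},y) α_k(π')`. -/
theorem optimal_inverse_filter_recursion
    {X Y A Bel : Type*} [Fintype X] [Fintype Y] [Fintype A] [Fintype Bel]
    [DecidableEq Bel]
    (val : Bel → X → ℝ) (Pk : X → X → ℝ) (Bk : X → Y → ℝ) (G : Bel → A → ℝ)
    (T : Bel → Y → Bel) (π₀ : Bel)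
    (hval : ∀ b x, 0 ≤ val b x) (hval1 : ∀ b, ∑ x, val b x = 1)
    (hPk : ∀ x x', 0 ≤ Pk x x') (hPk1 : ∀ x, ∑ x', Pk x x' = 1)
    (hBk : ∀ x y, 0 ≤ Bk x y) (hBk1 : ∀ x, ∑ y, Bk x y = 1)
    (hG : ∀ b a, 0 ≤ G b a) (hG1 : ∀ b, ∑ a, G b a = 1)
    (N k : ℕ) (hk : k < N) (x : ℕ → X) (a : ℕ → A)
    (hpos : 0 < probXA val Pk Bk G T π₀ (k+1) x a) :
    ∀ π : Bel,
      probXABel val Pk Bk G T π₀ (k+1) x a π / probXA val Pk Bk G T π₀ (k+1) x a =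
      (G π (a (k+1)) * ∑ π' : Bel,
          (∑ y : Y, if T π' y = π then Bk (x (k+1)) y else 0) *
            (probXABel val Pk Bk G T π₀ k x a π' / probXA val Pk Bk G T π₀ k x a)) /
        (∑ πbar : Bel, G πbar (a (k+1)) * ∑ π' : Bel,
          (∑ y : Y, if T π' y = πbar then Bk (x (k+1)) y else 0) *
            (probXABel val Pk Bk G T π₀ k x a π' / probXA val Pk Bk G T π₀ k x a)) := by
  intro π
  set c := Pk (x k) (x (k+1)) with hc_def
  set Sb : Bel → ℝ := probXABel val Pk Bk G T π₀ k x a with hSb_def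
  set S : ℝ := probXA val Pk Bk G T π₀ k x a with hS_def
  set M : Bel → ℝ := fun πb =>
    ∑ π' : Bel, (∑ y : Y, if T π' y = πb then Bk (x (k+1)) y else 0) * Sb π' with hM_def
  have hSb_nonneg : ∀ π', 0 ≤ Sb π' :=
    fun π' => probXABel_nonneg val Pk Bk G T π₀ hval hPk hBk hG k x a π'
  have hM_nonneg : ∀ πb, 0 ≤ M πb := by
    intro πb
    refine Finset.sum_nonneg fun π' _ => ?_
    refine mul_nonneg (Finset.sum_nonneg fun y _ => ?_) (hSb_nonneg π')
    split
    · exact hBk _ _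
    · exact le_refl 0
  have hkey : ∀ πb : Bel, probXABel val Pk Bk G T π₀ (k+1) x a πb =
      c * (G πb (a (k+1)) * M πb) :=
    fun πb => probXABel_succ val Pk Bk G T π₀ k x a πb
  set D : ℝ := ∑ πb : Bel, G πb (a (k+1)) * M πb with hD_def
  have hPXA : probXA val Pk Bk G T π₀ (k+1) x a = c * D := by
    rw [probXA_eq_sum, hD_def, Finset.mul_sum]
    exact Finset.sum_congr rfl fun πb _ => hkey πb
  have hcD : 0 < c * D := hPXA ▸ hpos
  have hc : 0 < c := by
    rcases (hPk (x k) (x (k+1)) : (0:ℝ) ≤ c).lt_or_eq with h | h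
    · exact h
    · exfalso
      have hz : c = 0 := h.symm
      rw [hz, zero_mul] at hcD
      exact lt_irrefl 0 hcD
  have hD_nonneg : 0 ≤ D :=
    Finset.sum_nonneg fun πb _ => mul_nonneg (hG _ _) (hM_nonneg πb)
  have hD : 0 < D := by
    rcases hD_nonneg.lt_or_eq with h | h
    · exact h
    · exfalso
      rw [← h, mul_zero] at hcD
      exact lt_irrefl 0 hcD
  have hSsum : S = ∑ π', Sb π' := probXA_eq_sum val Pk Bk G T π₀ k x a
  have hS : 0 < S := by
    have hSnn : (0:ℝ) ≤ S := hSsum ▸ Finset.sum_nonneg fun π' _ => hSb_nonneg π'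
    rcases hSnn.lt_or_eq with h | h
    · exact h
    · exfalso
      have hz : ∑ π' : Bel, Sb π' = 0 := by rw [← hSsum, ← h]
      have hall := (Finset.sum_eq_zero_iff_of_nonneg
        (fun π' _ => hSb_nonneg π')).mp hz
      have hMz : ∀ πb : Bel, M πb = 0 := by
        intro πb
        refine Finset.sum_eq_zero fun π' _ => ?_
        rw [hall π' (Finset.mem_univ π'), mul_zero]
      have hDz : D = 0 := by
        rw [hD_def]
        exact Finset.sum_eq_zero fun πb _ => by rw [hMz πb, mul_zero]
      rw [hDz] at hD
      exact lt_irrefl 0 hD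
  rw [hkey π, hPXA, mul_div_mul_left _ _ (ne_of_gt hc)]
  have hterm : ∀ πb : Bel,
      (∑ π' : Bel, (∑ y : Y, if T π' y = πb then Bk (x (k+1)) y else 0) * (Sb π' / S)) =
        M πb / S := by
    intro πb
    rw [hM_def, Finset.sum_div]
    exact Finset.sum_congr rfl fun π' _ => (mul_div_assoc _ _ _).symm
  simp only [hterm]
  have hden : ∑ πb : Bel, G πb (a (k+1)) * (M πb / S) = D / S := by
    rw [hD_def, Finset.sum_div]
    exact Finset.sum_congr rfl fun πb _ => (mul_div_assoc _ _ _).symm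
  rw [hden, ← mul_div_assoc, div_div_div_comm, div_self (ne_of_gt hS), div_one]


end
end
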